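/- For a ∉ {0,-1,-2,...}, z ≠ 0, |z| < 1, |t| < |z|, setting ν = η, δ = ξ, δ' = ξ' gives Φ(z,t,s,a) = ∑_{k=0}^∞ (μ)_k z^k / ((a+k)^s k!) · ₂F₁(η', -k; 1-η-k; t/z), where Φ(z,t,s,a) = ∑_{k,l≥0} (μ)_{k+l}(η)_k(η')_l / ((η)_{k+l} k! l!) · z^k t^l/(k+l+a)^s. -/

import Mathlib

open Complex

noncomputable def pch (x : ℂ) (n : ℕ) : ℂ := (ascPochhammer ℂ n).eval x

/-- The Gauss hypergeometric function ₂F₁ (as a series). -/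
noncomputable def hyp2F1 (a b c w : ℂ) : ℂ :=
  ∑' n : ℕ, (pch a n * pch b n) / (pch c n * (n.factorial : ℂ)) * w ^ n

open Filter Finset Topology

lemma pch_zero (x : ℂ) : pch x 0 = 1 := by simp [pch]

lemma pch_succ (x : ℂ) (n : ℕ) : pch x (n+1) = pch x n * (x + n) :=
  ascPochhammer_succ_eval n x

lemma pch_succ_left (x : ℂ) (n : ℕ) : pch x (n+1) = x * pch (x+1) n := by
  unfold pch
  rw [ascPochhammer_succ_left]
  simp [Polynomial.eval_comp]

lemma pch_add (x : ℂ) (n m : ℕ) : pch x (n + m) = pch x n * pch (x + (n:ℂ)) m := by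
  unfold pch
  rw [← ascPochhammer_mul]
  simp [Polynomial.eval_comp]

lemma pch_ne_zero (x : ℂ) (n : ℕ) (h : ∀ j : ℕ, j < n → x + j ≠ 0) : pch x n ≠ 0 := by
  induction n with
  | zero => simp [pch_zero]
  | succ n ih =>
    rw [pch_succ]
    exact mul_ne_zero (ih fun j hj => h j (hj.trans (Nat.lt_succ_self n)))
      (h n (Nat.lt_succ_self n))

lemma pch_neg_nat (k l : ℕ) :
    pch (-((k+l : ℕ) : ℂ)) l * (Nat.factorial k : ℂ) = (-1)^l * (Nat.factorial (k+l) : ℂ) := by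
  induction l with
  | zero => simp [pch_zero]
  | succ l ih =>
    have e : -(((k + (l+1) : ℕ)) : ℂ) + 1 = -((k + l : ℕ) : ℂ) := by push_cast; ring
    have e2 : k + (l+1) = (k+l)+1 := by ring
    rw [pch_succ_left, e, mul_assoc, ih, e2, Nat.factorial_succ]
    push_cast
    ring

lemma pch_reflect (x : ℂ) (l : ℕ) : pch (1 - x - (l:ℕ)) l = (-1)^l * pch x l := by
  induction l with
  | zero => simp [pch_zero]
  | succ l ih =>
    have e : (1 - x - ((l+1 : ℕ):ℂ)) + 1 = 1 - x - (l:ℕ) := by push_cast; ring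
    rw [pch_succ_left, e, ih, pch_succ]
    push_cast
    ring

lemma exists_bound (u v : ℕ → ℝ) (hv : ∀ m, 0 < v m) (C₀ : ℝ) (M : ℕ)
    (h : ∀ m, M ≤ m → u m ≤ C₀ * v m) : ∃ C, ∀ m, u m ≤ C * v m := by
  obtain ⟨b, hb⟩ := ((Finset.range M).image fun m => u m / v m).bddAbove
  refine ⟨max C₀ b, fun m => ?_⟩
  rcases lt_or_ge m M with hm | hm
  · have hub : u m / v m ≤ b := hb (Finset.mem_coe.2 (Finset.mem_image.2 ⟨m, Finset.mem_range.2 hm, rfl⟩))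
    have : u m / v m ≤ max C₀ b := hub.trans (le_max_right _ _)
    calc u m = u m / v m * v m := (div_mul_cancel₀ _ (hv m).ne').symm
      _ ≤ max C₀ b * v m := mul_le_mul_of_nonneg_right this (hv m).le
  · exact (h m hm).trans (mul_le_mul_of_nonneg_right (le_max_left _ _) (hv m).le)

lemma tendsto_inv_nat_add (c : ℂ) :
    Tendsto (fun m : ℕ => ((m:ℂ) + c)⁻¹) atTop (𝓝 0) := by
  rw [tendsto_zero_iff_norm_tendsto_zero]
  have h1 : Tendsto (fun m : ℕ => (m:ℝ) - ‖c‖) atTop atTop :=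
    tendsto_atTop_add_const_right _ _ tendsto_natCast_atTop_atTop
  have h2 : Tendsto (fun m : ℕ => ‖(m:ℂ) + c‖) atTop atTop := by
    refine tendsto_atTop_mono (fun m => ?_) h1
    have h3 : ‖(m:ℂ)‖ - ‖c‖ ≤ ‖(m:ℂ) + c‖ := by
      have h4 := norm_add_le ((m:ℂ) + c) (-c)
      simp only [add_neg_cancel_right, norm_neg] at h4
      linarith
    simpa using h3
  simp only [norm_inv]; exact h2.inv_tendsto_atTop

lemma tendsto_ratio (x y : ℂ) :
    Tendsto (fun m : ℕ => ‖x + m‖ / ‖y + m‖) atTop (𝓝 1) := by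
  have key : Tendsto (fun m : ℕ => (1 : ℂ) + (x - y) * ((m:ℂ) + y)⁻¹) atTop (𝓝 1) := by
    simpa using tendsto_const_nhds.add ((tendsto_inv_nat_add y).const_mul (x - y))
  have knorm : Tendsto (fun m : ℕ => ‖(1 : ℂ) + (x - y) * ((m:ℂ) + y)⁻¹‖) atTop (𝓝 1) := by
    simpa using key.norm
  refine knorm.congr' ?_
  filter_upwards [eventually_gt_atTop (⌈‖y‖⌉₊)] with m hm
  have hy : (m:ℂ) + y ≠ 0 := by
    intro h0
    have h1 : ‖(m:ℂ)‖ = ‖y‖ := by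
      have : (m:ℂ) = -y := eq_neg_of_add_eq_zero_left h0
      simp [this]
    have : (m:ℝ) ≤ ⌈‖y‖⌉₊ := by
      rw [Complex.norm_natCast] at h1
      exact_mod_cast h1.le.trans (Nat.le_ceil _)
    exact absurd (Nat.cast_lt.2 hm) (not_lt.2 (by exact_mod_cast this))
  have hy' : y + (m:ℂ) ≠ 0 := by rwa [add_comm] at hy
  have : (1 : ℂ) + (x - y) * ((m:ℂ) + y)⁻¹ = (x + m) / (y + m) := by
    rw [eq_div_iff hy', add_mul, one_mul, add_comm (m:ℂ) y, mul_assoc, mul_comm ((y + (m:ℂ))⁻¹),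
      mul_inv_cancel₀ hy']
    ring
  rw [this, norm_div]

lemma pch_eq_zero_of (x : ℂ) (j n : ℕ) (hx : x + j = 0) (hj : j < n) : pch x n = 0 := by
  have hn : n = (j + 1) + (n - (j+1)) := by omega
  rw [hn, pch_add, pch_succ, hx]
  ring

lemma norm_one_add_nat (k : ℕ) : ‖(1:ℂ) + k‖ = (k:ℝ) + 1 := by
  rw [show (1:ℂ) + k = ((k+1:ℕ):ℂ) by push_cast; ring, Complex.norm_natCast]
  push_cast; ring

lemma summable_pch_geom (x : ℂ) (r : ℝ) (hr0 : 0 ≤ r) (hr : r < 1) :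
    Summable (fun k : ℕ => ‖pch x k‖ * r^k / (Nat.factorial k : ℝ)) := by
  by_cases hx : ∃ j : ℕ, x + j = 0
  · obtain ⟨j, hj⟩ := hx
    refine summable_of_ne_finset_zero (s := Finset.range (j+1)) fun k hk => ?_
    rw [Finset.mem_range, not_lt] at hk
    rw [pch_eq_zero_of x j k hj (by omega)]
    simp
  · push_neg at hx
    rcases eq_or_lt_of_le hr0 with hr0' | hr0'
    · refine summable_of_ne_finset_zero (s := Finset.range 1) fun k hk => ?_
      rw [Finset.mem_range, not_lt] at hk
      rw [← hr0', zero_pow (by omega)]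
      simp
    · have hne : ∀ k : ℕ, ‖pch x k‖ * r^k / (Nat.factorial k : ℝ) ≠ 0 := fun k => by
        have h1 : (0:ℝ) < ‖pch x k‖ := norm_pos_iff.2 (pch_ne_zero x k fun j _ => hx j)
        positivity
      refine summable_of_ratio_test_tendsto_lt_one hr (Eventually.of_forall hne) ?_
      have heq : ∀ k : ℕ,
          ‖‖pch x (k+1)‖ * r^(k+1) / (Nat.factorial (k+1) : ℝ)‖ /
            ‖‖pch x k‖ * r^k / (Nat.factorial k : ℝ)‖ =
          ‖x + k‖ / ‖(1:ℂ) + k‖ * r := by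
        intro k
        have h1 : pch x k ≠ 0 := pch_ne_zero x k fun j _ => hx j
        have h1' : (0:ℝ) < ‖pch x k‖ := norm_pos_iff.2 h1
        have hf : (0:ℝ) < (Nat.factorial k : ℝ) := by positivity
        have hk1 : ((k:ℝ) + 1) ≠ 0 := by positivity
        have haa : ‖pch x k‖ * r^k / (Nat.factorial k : ℝ) ≠ 0 := hne k
        have ha : ‖pch x (k+1)‖ * r^(k+1) / (Nat.factorial (k+1) : ℝ) =
            (‖pch x k‖ * r^k / (Nat.factorial k : ℝ)) * (‖x + k‖ / ‖(1:ℂ) + k‖ * r) := by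
          rw [pch_succ, norm_mul, pow_succ, Nat.factorial_succ, norm_one_add_nat]
          push_cast
          field_simp
        rw [Real.norm_of_nonneg (by positivity), Real.norm_of_nonneg (by positivity), ha,
          mul_comm, mul_div_assoc, div_self haa, mul_one]
        
      refine Tendsto.congr (fun k => (heq k).symm) ?_
      have := (tendsto_ratio x 1).mul_const r
      simpa using this

lemma tendsto_arg_nat_add (a : ℂ) :
    Tendsto (fun m : ℕ => Complex.arg ((m:ℂ) + a)) atTop (𝓝 0) := by
  have h0 : Tendsto (fun m : ℕ => (1:ℂ) + a * ((m:ℂ) + 0)⁻¹) atTop (𝓝 1) := by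
    simpa using tendsto_const_nhds.add ((tendsto_inv_nat_add 0).const_mul a)
  have harg : Tendsto (fun m : ℕ => Complex.arg ((1:ℂ) + a * ((m:ℂ) + 0)⁻¹)) atTop (𝓝 0) := by
    have hc : ContinuousAt Complex.arg 1 := continuousAt_arg (by
      simp [Complex.mem_slitPlane_iff])
    simpa [Complex.arg_one, Function.comp_def] using hc.tendsto.comp h0
  refine harg.congr' ?_
  filter_upwards [eventually_gt_atTop 0] with m hm
  have hm' : (0:ℝ) < (m:ℝ) := by exact_mod_cast hm
  have hne : (m:ℂ) ≠ 0 := Nat.cast_ne_zero.2 hm.ne'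
  have : ((m:ℝ):ℂ) * ((1:ℂ) + a * ((m:ℂ) + 0)⁻¹) = (m:ℂ) + a := by
    push_cast
    rw [add_zero, mul_add, mul_one, mul_left_comm, mul_inv_cancel₀ hne, mul_one]
  rw [← this, Complex.arg_real_mul _ hm']

lemma nat_add_ne (a : ℂ) (ha : ∀ n : ℕ, a ≠ -(n : ℂ)) (m : ℕ) : (m:ℂ) + a ≠ 0 := by
  intro h
  exact ha m (by linear_combination h)

/-- ratio of cpow norms tends to 1 -/
lemma tendsto_cpow_ratio (a s : ℂ) (ha : ∀ n : ℕ, a ≠ -(n : ℂ)) :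
    Tendsto (fun m : ℕ => ‖((((m+1:ℕ)):ℂ) + a) ^ (-s)‖ / ‖(((m:ℕ):ℂ) + a) ^ (-s)‖)
      atTop (𝓝 1) := by
  have hane := nat_add_ne a ha
  set A : ℕ → ℝ := fun m => ‖(m:ℂ) + a‖ with hA
  set g : ℕ → ℝ := fun m => Complex.arg ((m:ℂ) + a) with hg
  have hApos : ∀ m, 0 < A m := fun m => norm_pos_iff.mpr (hane m)
  have T1 : Tendsto (fun m : ℕ => A (m+1) / A m) atTop (𝓝 1) := by
    refine (tendsto_ratio (a+1) a).congr fun m => ?_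
    have e1 : (a+1) + (m:ℂ) = ((m+1:ℕ):ℂ) + a := by push_cast; ring
    have e2 : a + (m:ℂ) = (m:ℂ) + a := by ring
    rw [e1, e2]
  have T1' : Tendsto (fun m : ℕ => (A (m+1) / A m) ^ ((-s).re)) atTop (𝓝 1) := by
    have hc : ContinuousAt (fun x : ℝ => x ^ ((-s).re)) 1 :=
      Real.continuousAt_rpow_const 1 _ (Or.inl one_ne_zero)
    simpa [Real.one_rpow, Function.comp_def] using hc.tendsto.comp T1
  have hg0 : Tendsto g atTop (𝓝 0) := tendsto_arg_nat_add a
  have hg1 : Tendsto (fun m : ℕ => g (m+1)) atTop (𝓝 0) :=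
    hg0.comp (tendsto_add_atTop_nat 1)
  have T2 : Tendsto (fun m : ℕ => Real.exp (g m * (-s).im - g (m+1) * (-s).im))
      atTop (𝓝 1) := by
    have : Tendsto (fun m : ℕ => g m * (-s).im - g (m+1) * (-s).im) atTop (𝓝 0) := by
      simpa using ((hg0.mul_const ((-s).im)).sub (hg1.mul_const ((-s).im)))
    simpa [Function.comp_def] using (Real.continuous_exp.continuousAt (x := 0)).tendsto.comp this
  have := T1'.mul T2
  rw [one_mul] at this
  refine this.congr fun m => ?_
  have h1 : ‖((((m+1:ℕ)):ℂ) + a) ^ (-s)‖ =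
      A (m+1) ^ ((-s).re) / Real.exp (g (m+1) * (-s).im) := by
    rw [Complex.norm_cpow_of_ne_zero (hane (m+1))]
  have h2 : ‖(((m:ℕ):ℂ) + a) ^ (-s)‖ =
      A m ^ ((-s).re) / Real.exp (g m * (-s).im) := by
    rw [Complex.norm_cpow_of_ne_zero (hane m)]
  rw [Real.div_rpow (hApos (m+1)).le (hApos m).le, Real.exp_sub]
  rw [h1, h2]
  have e1 : A m ^ ((-s).re) ≠ 0 := (Real.rpow_pos_of_pos (hApos m) _).ne'
  have e2 : A (m+1) ^ ((-s).re) ≠ 0 := (Real.rpow_pos_of_pos (hApos (m+1)) _).ne'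
  have e3 : Real.exp (g m * (-s).im) ≠ 0 := (Real.exp_pos _).ne'
  have e4 : Real.exp (g (m+1) * (-s).im) ≠ 0 := (Real.exp_pos _).ne'
  field_simp

lemma w_le_geom (μ η a s : ℂ) (ha : ∀ n : ℕ, a ≠ -(n : ℂ)) (hη0 : ∀ n : ℕ, η ≠ -(n : ℂ))
    (ρ : ℝ) (hρ : 1 < ρ) :
    ∃ C, ∀ m : ℕ, ‖pch μ m‖ * ‖(((m:ℕ):ℂ) + a) ^ (-s)‖ / ‖pch η m‖ ≤ C * ρ^m := by
  have hρ0 : (0:ℝ) < ρ := lt_trans one_pos hρ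
  set w : ℕ → ℝ := fun m => ‖pch μ m‖ * ‖(((m:ℕ):ℂ) + a) ^ (-s)‖ / ‖pch η m‖ with hw
  have hρpos : ∀ m : ℕ, (0:ℝ) < ρ^m := fun m => pow_pos hρ0 m
  have hane := nat_add_ne a ha
  have hηadd : ∀ j : ℕ, η + (j:ℂ) ≠ 0 := fun j h => hη0 j (by linear_combination h)
  have hηne : ∀ m, pch η m ≠ 0 := fun m => pch_ne_zero η m fun j _ => hηadd j
  have hηpos : ∀ m, (0:ℝ) < ‖pch η m‖ := fun m => norm_pos_iff.2 (hηne m)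
  by_cases hμ : ∃ j : ℕ, μ + (j:ℂ) = 0
  · obtain ⟨j, hj⟩ := hμ
    refine exists_bound w (fun m => ρ^m) hρpos 1 (j+1) fun m hm => ?_
    have : pch μ m = 0 := pch_eq_zero_of μ j m hj (by omega)
    simp only [hw, this, norm_zero, zero_mul, zero_div, one_mul]
    exact (hρpos m).le
  · push_neg at hμ
    have hμadd : ∀ j : ℕ, μ + (j:ℂ) ≠ 0 := hμ
    have hμne : ∀ m, pch μ m ≠ 0 := fun m => pch_ne_zero μ m fun j _ => hμadd j
    have hcne : ∀ m : ℕ, (((m:ℕ):ℂ) + a) ^ (-s) ≠ 0 := fun m => by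
      intro h
      rcases (Complex.cpow_eq_zero_iff _ _).1 h with ⟨h0, -⟩
      exact hane m h0
    have hwpos : ∀ m, 0 < w m := fun m => by
      have h1 := norm_pos_iff.2 (hμne m)
      have h2 := norm_pos_iff.2 (hcne m)
      have h3 := hηpos m
      positivity
    have hratio : Tendsto (fun m => w (m+1) / w m) atTop (𝓝 1) := by
      have h := (tendsto_ratio μ η).mul (tendsto_cpow_ratio a s ha)
      rw [one_mul] at h
      refine h.congr fun m => ?_
      have e : w (m+1) = w m * ((‖μ + m‖ / ‖η + m‖) *
          (‖((((m+1:ℕ)):ℂ) + a) ^ (-s)‖ / ‖(((m:ℕ):ℂ) + a) ^ (-s)‖)) := by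
        simp only [hw]
        rw [pch_succ, pch_succ, norm_mul, norm_mul]
        have n1 := (norm_pos_iff.2 (hμne m))
        have n2 := hηpos m
        have n3 := (norm_pos_iff.2 (hcne m))
        have n4 := (norm_pos_iff.2 (hcne (m+1)))
        have n5 := (norm_pos_iff.2 (hμadd m))
        have n6 := (norm_pos_iff.2 (hηadd m))
        rw [div_mul_div_comm, div_mul_div_comm,
          div_eq_div_iff (mul_pos n2 n6).ne' (mul_pos n2 (mul_pos n6 n3)).ne']
        ring
      rw [e, mul_comm (w m), mul_div_assoc, div_self (hwpos m).ne', mul_one]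
    have hev : ∀ᶠ m in atTop, w (m+1) / w m ≤ ρ := hratio.eventually_le_const hρ
    obtain ⟨M, hM⟩ := eventually_atTop.1 hev
    refine exists_bound w (fun m => ρ^m) hρpos (w M / ρ^M) M fun m hm => ?_
    induction m, hm using Nat.le_induction with
    | base => rw [div_mul_cancel₀ _ (hρpos M).ne']
    | succ m hm ih =>
      have h1 : w (m+1) ≤ ρ * w m := by
        have := hM m hm
        rwa [div_le_iff₀ (hwpos m)] at this
      calc w (m+1) ≤ ρ * w m := h1
        _ ≤ ρ * (w M / ρ^M * ρ^m) := by
            exact mul_le_mul_of_nonneg_left ih hρ0.le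
        _ = w M / ρ^M * ρ^(m+1) := by ring

section main
variable (μ η η' z t s a : ℂ)

lemma term_eq (ha : ∀ n : ℕ, a ≠ -(n : ℂ)) (hη0 : ∀ n : ℕ, η ≠ -(n : ℂ)) (hz0 : z ≠ 0)
    (k l : ℕ) :
    pch μ (k+l) * pch η k * pch η' l /
        (pch η (k+l) * (Nat.factorial k : ℂ) * (Nat.factorial l : ℂ)) *
      (z^k * t^l / ((k:ℂ) + (l:ℂ) + a)^s) =
    pch μ (k+l) * z^(k+l) / ((a + ((k+l:ℕ):ℂ))^s * (Nat.factorial (k+l) : ℂ)) *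
      (pch η' l * pch (-((k+l:ℕ):ℂ)) l /
        (pch (1 - η - ((k+l:ℕ):ℂ)) l * (Nat.factorial l : ℂ)) * (t/z)^l) := by
  have hm : pch η (k+l) = pch η k * pch (η + (k:ℂ)) l := pch_add η k l
  have hk2 : (Nat.factorial k : ℂ) ≠ 0 := Nat.cast_ne_zero.2 (Nat.factorial_ne_zero k)
  have hl2 : (Nat.factorial l : ℂ) ≠ 0 := Nat.cast_ne_zero.2 (Nat.factorial_ne_zero l)
  have hkl2 : (Nat.factorial (k+l) : ℂ) ≠ 0 := Nat.cast_ne_zero.2 (Nat.factorial_ne_zero _)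
  have h2 : pch (-((k+l:ℕ):ℂ)) l = (-1)^l * (Nat.factorial (k+l) : ℂ) / (Nat.factorial k : ℂ) := by
    rw [eq_div_iff hk2]; exact pch_neg_nat k l
  have h3 : pch (1 - η - ((k+l:ℕ):ℂ)) l = (-1)^l * pch (η + (k:ℂ)) l := by
    have e : (1 : ℂ) - (η + (k:ℂ)) - (l:ℕ) = 1 - η - ((k+l:ℕ):ℂ) := by push_cast; ring
    rw [← e]; exact pch_reflect (η + (k:ℂ)) l
  have hpek : pch (η + (k:ℂ)) l ≠ 0 := by
    refine pch_ne_zero _ _ fun j _ hc => hη0 (k+j) ?_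
    push_cast
    linear_combination hc
  have hpk : pch η k ≠ 0 := by
    refine pch_ne_zero _ _ fun j _ hc => hη0 j ?_
    linear_combination hc
  have hcast : (k:ℂ) + (l:ℂ) + a = a + ((k+l:ℕ):ℂ) := by push_cast; ring
  have hden : (a + ((k+l:ℕ):ℂ))^s ≠ 0 := by
    intro h
    rcases (Complex.cpow_eq_zero_iff _ _).1 h with ⟨h0, -⟩
    exact ha (k+l) (by linear_combination h0)
  have hneg : ((-1 : ℂ))^l ≠ 0 := pow_ne_zero _ (by norm_num)
  rw [hcast, hm, h3, pow_add, div_pow]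
  have hzk : z^k ≠ 0 := pow_ne_zero _ hz0
  have hzl : z^l ≠ 0 := pow_ne_zero _ hz0
  rw [div_mul_div_comm, div_mul_div_comm, div_mul_div_comm]
  rw [div_eq_div_iff
    (mul_ne_zero (mul_ne_zero (mul_ne_zero (mul_ne_zero hpk hpek) hk2) hl2) hden)
    (mul_ne_zero (mul_ne_zero hden hkl2)
      (mul_ne_zero (mul_ne_zero (mul_ne_zero hneg hpek) hl2) hzl))]
  linear_combination (-(pch μ (k+l) * pch η k * pch η' l * z^k * z^l * t^l *
    (a + ((k+l:ℕ):ℂ))^s * pch (η + (k:ℂ)) l * (Nat.factorial l : ℂ))) * pch_neg_nat k l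
lemma diag_eq (ha : ∀ n : ℕ, a ≠ -(n : ℂ)) (hη0 : ∀ n : ℕ, η ≠ -(n : ℂ)) (hz0 : z ≠ 0)
    (m : ℕ) :
    (∑ p ∈ Finset.HasAntidiagonal.antidiagonal m,
      (pch μ (p.1 + p.2) * pch η p.1 * pch η' p.2) /
          (pch η (p.1 + p.2) * (p.1.factorial : ℂ) * (p.2.factorial : ℂ)) *
        (z ^ p.1 * t ^ p.2 / ((p.1 : ℂ) + (p.2 : ℂ) + a) ^ s)) =
    pch μ m * z ^ m / ((a + (m:ℂ)) ^ s * (m.factorial : ℂ)) *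
      hyp2F1 η' (-(m : ℂ)) (1 - η - (m:ℂ)) (t / z) := by
  have h2F1 : hyp2F1 η' (-(m : ℂ)) (1 - η - (m:ℂ)) (t / z) =
      ∑ n ∈ Finset.range (m+1),
        (pch η' n * pch (-(m:ℂ)) n / (pch (1 - η - (m:ℂ)) n * (n.factorial : ℂ)) * (t/z)^n) := by
    refine tsum_eq_sum fun n hn => ?_
    rw [Finset.mem_range, not_lt] at hn
    have h0 : pch (-(m:ℂ)) n = 0 := pch_eq_zero_of _ m n (by simp) (by omega)
    simp [h0]
  rw [h2F1, Finset.mul_sum, Finset.Nat.sum_antidiagonal_eq_sum_range_succ_mk]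
  have hrefl := Finset.sum_range_reflect (fun n =>
    pch μ m * z ^ m / ((a + (m:ℂ)) ^ s * (m.factorial : ℂ)) *
      (pch η' n * pch (-(m:ℂ)) n / (pch (1 - η - (m:ℂ)) n * (n.factorial : ℂ)) * (t/z)^n)) (m+1)
  simp only [Nat.add_sub_cancel] at hrefl
  rw [← hrefl]
  refine Finset.sum_congr rfl fun k hk => ?_
  rw [Finset.mem_range, Nat.lt_succ_iff] at hk
  obtain ⟨l, hl⟩ : ∃ l, m - k = l := ⟨_, rfl⟩
  have hkl : k + l = m := by omega
  rw [hl]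
  subst hkl
  exact term_eq μ η η' z t s a ha hη0 hz0 k l

lemma summable_f (ha : ∀ n : ℕ, a ≠ -(n : ℂ)) (hη0 : ∀ n : ℕ, η ≠ -(n : ℂ))
    (hz0 : z ≠ 0) (hz : ‖z‖ < 1) (ht : ‖t‖ < ‖z‖) :
    Summable (fun p : ℕ × ℕ =>
      (pch μ (p.1 + p.2) * pch η p.1 * pch η' p.2) /
          (pch η (p.1 + p.2) * (p.1.factorial : ℂ) * (p.2.factorial : ℂ)) *
        (z ^ p.1 * t ^ p.2 / ((p.1 : ℂ) + (p.2 : ℂ) + a) ^ s)) := by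
  have hza : (0:ℝ) < ‖z‖ := norm_pos_iff.2 hz0
  set ρ : ℝ := (1 + ‖z‖⁻¹)/2 with hρdef
  have hρ : 1 < ρ := by
    have : 1 < ‖z‖⁻¹ := (one_lt_inv₀ hza).2 hz
    rw [hρdef]; linarith
  have hρ0 : (0:ℝ) < ρ := lt_trans one_pos hρ
  have hρz : ρ * ‖z‖ < 1 := by
    rw [hρdef, div_mul_eq_mul_div, add_mul, one_mul, inv_mul_cancel₀ hza.ne']
    linarith
  have hρz0 : (0:ℝ) ≤ ρ * ‖z‖ := by positivity
  have hρt : ρ * ‖t‖ < 1 := lt_of_le_of_lt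
    (mul_le_mul_of_nonneg_left ht.le hρ0.le) hρz
  have hρt0 : (0:ℝ) ≤ ρ * ‖t‖ := by positivity
  have hu := summable_pch_geom η (ρ * ‖z‖) hρz0 hρz
  have hv := summable_pch_geom η' (ρ * ‖t‖) hρt0 hρt
  obtain ⟨C, hC⟩ := w_le_geom μ η a s ha hη0 ρ hρ
  refine Summable.of_norm_bounded (g :=
    (fun p : ℕ × ℕ => C * ((‖pch η p.1‖ * (ρ * ‖z‖)^p.1 / (Nat.factorial p.1 : ℝ)) *
      (‖pch η' p.2‖ * (ρ * ‖t‖)^p.2 / (Nat.factorial p.2 : ℝ)))))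
    ((hu.mul_of_nonneg hv (fun k => by positivity) (fun l => by positivity)).mul_left C) ?_
  rintro ⟨k, l⟩
  have hcast : (k:ℂ) + (l:ℂ) + a = ((k+l:ℕ):ℂ) + a := by push_cast; ring
  have heq : ‖(pch μ (k + l) * pch η k * pch η' l) /
          (pch η (k + l) * (Nat.factorial k : ℂ) * (Nat.factorial l : ℂ)) *
        (z ^ k * t ^ l / ((k : ℂ) + (l : ℂ) + a) ^ s)‖ =
      (‖pch μ (k+l)‖ * ‖(((k+l:ℕ):ℂ) + a) ^ (-s)‖ / ‖pch η (k+l)‖) *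
        (‖pch η k‖ * ‖z‖^k / (Nat.factorial k : ℝ)) *
        (‖pch η' l‖ * ‖t‖^l / (Nat.factorial l : ℝ)) := by
    rw [hcast, Complex.cpow_neg, norm_inv]
    simp only [norm_div, norm_mul, norm_pow, Complex.norm_natCast]
    ring
  have hUpos : (0:ℝ) ≤ ‖pch η k‖ * ‖z‖^k / (Nat.factorial k : ℝ) := by positivity
  have hVpos : (0:ℝ) ≤ ‖pch η' l‖ * ‖t‖^l / (Nat.factorial l : ℝ) := by positivity
  calc ‖(pch μ (k + l) * pch η k * pch η' l) /
          (pch η (k + l) * (Nat.factorial k : ℂ) * (Nat.factorial l : ℂ)) *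
        (z ^ k * t ^ l / ((k : ℂ) + (l : ℂ) + a) ^ s)‖
      = (‖pch μ (k+l)‖ * ‖(((k+l:ℕ):ℂ) + a) ^ (-s)‖ / ‖pch η (k+l)‖) *
        (‖pch η k‖ * ‖z‖^k / (Nat.factorial k : ℝ)) *
        (‖pch η' l‖ * ‖t‖^l / (Nat.factorial l : ℝ)) := heq
    _ ≤ (C * ρ^(k+l)) *
        (‖pch η k‖ * ‖z‖^k / (Nat.factorial k : ℝ)) *
        (‖pch η' l‖ * ‖t‖^l / (Nat.factorial l : ℝ)) := by
          exact mul_le_mul_of_nonneg_right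
            (mul_le_mul_of_nonneg_right (hC (k+l)) hUpos) hVpos
    _ = C * ((‖pch η k‖ * (ρ * ‖z‖)^k / (Nat.factorial k : ℝ)) *
        (‖pch η' l‖ * (ρ * ‖t‖)^l / (Nat.factorial l : ℝ))) := by
          rw [pow_add, mul_pow, mul_pow]
          ring
end main

set_option maxHeartbeats 1600000 in
theorem Phi_series_2F1 (μ η η' z t s a : ℂ)
    (ha : ∀ n : ℕ, a ≠ -(n : ℂ)) (hη : ∀ n : ℕ, 0 < n → η ≠ (n : ℂ))
    (hη0 : ∀ n : ℕ, η ≠ -(n : ℂ))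
    (hz0 : z ≠ 0) (hz : ‖z‖ < 1) (ht : ‖t‖ < ‖z‖) :
    (∑' p : ℕ × ℕ,
        (pch μ (p.1 + p.2) * pch η p.1 * pch η' p.2) /
            (pch η (p.1 + p.2) * (p.1.factorial : ℂ) * (p.2.factorial : ℂ)) *
          (z ^ p.1 * t ^ p.2 / ((p.1 : ℂ) + (p.2 : ℂ) + a) ^ s)) =
      ∑' k : ℕ,
        pch μ k * z ^ k / ((a + k) ^ s * (k.factorial : ℂ)) *
          hyp2F1 η' (-(k : ℂ)) (1 - η - k) (t / z) := by
  set f : ℕ × ℕ → ℂ := fun p =>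
    (pch μ (p.1 + p.2) * pch η p.1 * pch η' p.2) /
        (pch η (p.1 + p.2) * (p.1.factorial : ℂ) * (p.2.factorial : ℂ)) *
      (z ^ p.1 * t ^ p.2 / ((p.1 : ℂ) + (p.2 : ℂ) + a) ^ s) with hf
  have hsum : Summable f := summable_f μ η η' z t s a ha hη0 hz0 hz ht
  have e1 := (Finset.HasAntidiagonal.sigmaAntidiagonalEquivProd (A := ℕ)).tsum_eq f
  have hs2 : Summable (fun c : (Σ n : ℕ, {x // x ∈ Finset.HasAntidiagonal.antidiagonal n}) =>
      f (Finset.HasAntidiagonal.sigmaAntidiagonalEquivProd c)) :=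
    (Equiv.summable_iff Finset.HasAntidiagonal.sigmaAntidiagonalEquivProd).2 hsum
  rw [← e1, hs2.tsum_sigma]
  refine tsum_congr fun m => ?_
  have e2 : ∀ p : {x // x ∈ Finset.HasAntidiagonal.antidiagonal m},
      f (Finset.HasAntidiagonal.sigmaAntidiagonalEquivProd ⟨m, p⟩) = f ↑p := fun p => rfl
  calc (∑' p : {x // x ∈ Finset.HasAntidiagonal.antidiagonal m},
        f (Finset.HasAntidiagonal.sigmaAntidiagonalEquivProd ⟨m, p⟩))
      = ∑' p : {x // x ∈ Finset.HasAntidiagonal.antidiagonal m}, f ↑p := tsum_congr e2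
    _ = ∑ p ∈ Finset.HasAntidiagonal.antidiagonal m, f p := Finset.tsum_subtype _ f
    _ = pch μ m * z ^ m / ((a + (m:ℂ)) ^ s * (m.factorial : ℂ)) *
        hyp2F1 η' (-(m : ℂ)) (1 - η - (m:ℂ)) (t / z) := diag_eq μ η η' z t s a ha hη0 hz0 m
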